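/- For all real numbers a, b > 0 with a ≠ b and all v ∈ (0,1), one has L_v(a,b) ≤ ((a♯_v b) + (a∇_v b))/2 ≤ a∇_v b. -/

import Mathlib

/-- The logarithmic mean of two positive reals. -/
noncomputable def logMean (a b : ℝ) : ℝ :=
  if a = b then a else (b - a) / (Real.log b - Real.log a)

/-- The identric mean of two positive reals. -/
noncomputable def idMean (a b : ℝ) : ℝ :=
  if a = b then a else Real.exp (-1) * (b ^ b / a ^ a) ^ (b - a)⁻¹

/-- The weighted arithmetic mean `a ∇_v b`. -/
def wArith (v a b : ℝ) : ℝ := (1 - v) * a + v * b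

/-- The weighted geometric mean `a ♯_v b`. -/
noncomputable def wGeom (v a b : ℝ) : ℝ := a ^ (1 - v) * b ^ v

/-- The weighted harmonic mean `a !_v b`. -/
noncomputable def wHarm (v a b : ℝ) : ℝ := ((1 - v) / a + v / b)⁻¹

/-- The weighted logarithmic mean `L_v(a,b)` (for `a ≠ b`, `v ∈ (0,1)`). -/
noncomputable def wLog (v a b : ℝ) : ℝ :=
  (1 / (Real.log a - Real.log b)) *
    (((1 - v) / v) * (a - a ^ (1 - v) * b ^ v) + (v / (1 - v)) * (a ^ (1 - v) * b ^ v - b))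

/-- The weighted identric mean `I_v(a,b)` (for `a ≠ b`, `v ∈ (0,1)`). -/
noncomputable def wId (v a b : ℝ) : ℝ :=
  Real.exp (-1) * wArith v a b ^ ((1 - 2 * v) * wArith v a b / (v * (1 - v) * (b - a))) *
    (b ^ (v * b / (1 - v)) / a ^ ((1 - v) * a / v)) ^ (b - a)⁻¹

lemma key_log_ineq {t : ℝ} (ht : 1 ≤ t) : 2 * (t - 1) ≤ (t + 1) * Real.log t := by
  set f : ℝ → ℝ := fun x => (x + 1) * Real.log x - 2 * (x - 1) with hf
  have hmono : MonotoneOn f (Set.Ici (1:ℝ)) := by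
    apply monotoneOn_of_deriv_nonneg (convex_Ici 1)
    · apply ContinuousOn.sub
      · exact (continuousOn_id.add continuousOn_const).mul
          (Real.continuousOn_log.mono (by intro x hx; simp at hx ⊢; linarith))
      · fun_prop
    · intro x hx
      rw [interior_Ici] at hx
      have hx0 : (0:ℝ) < x := lt_trans one_pos hx
      have hd : HasDerivAt f (Real.log x + (x + 1) / x - 2) x := by
        have h1 : HasDerivAt (fun x : ℝ => (x + 1) * Real.log x)
            (1 * Real.log x + (x + 1) * x⁻¹) x :=
          ((hasDerivAt_id x).add_const 1).mul (Real.hasDerivAt_log hx0.ne')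
        have h2 : HasDerivAt (fun x : ℝ => 2 * (x - 1)) 2 x := by
          simpa using ((hasDerivAt_id x).sub_const 1).const_mul 2
        convert h1.sub h2 using 1
        · rfl
        · rfl
        · rfl
        · ring
      exact hd.differentiableAt.differentiableWithinAt
    · intro x hx
      rw [interior_Ici] at hx
      have hx0 : (0:ℝ) < x := lt_trans one_pos hx
      have hd : HasDerivAt f (Real.log x + (x + 1) / x - 2) x := by
        have h1 : HasDerivAt (fun x : ℝ => (x + 1) * Real.log x)
            (1 * Real.log x + (x + 1) * x⁻¹) x :=
          ((hasDerivAt_id x).add_const 1).mul (Real.hasDerivAt_log hx0.ne')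
        have h2 : HasDerivAt (fun x : ℝ => 2 * (x - 1)) 2 x := by
          simpa using ((hasDerivAt_id x).sub_const 1).const_mul 2
        convert h1.sub h2 using 1
        · rfl
        · rfl
        · rfl
        · ring
      rw [hd.deriv]
      have hlog : Real.log x⁻¹ ≤ x⁻¹ - 1 := Real.log_le_sub_one_of_pos (by positivity)
      rw [Real.log_inv] at hlog
      have : (x + 1) / x = 1 + 1/x := by field_simp
      rw [this]
      have : (1:ℝ)/x = x⁻¹ := one_div x
      rw [this]
      linarith
  have h0 : f 1 = 0 := by simp [hf]
  have := hmono (Set.self_mem_Ici) (Set.mem_Ici.mpr ht) ht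
  rw [h0] at this
  simp only [hf] at this
  linarith

lemma logmean_le_arith : ∀ {x y : ℝ}, 0 < x → 0 < y → x ≠ y →
    (x - y) / (Real.log x - Real.log y) ≤ (x + y) / 2 := by
  have main : ∀ {x y : ℝ}, 0 < x → 0 < y → y < x →
      (x - y) / (Real.log x - Real.log y) ≤ (x + y) / 2 := by
    intro x y hx hy hlt
    have hlog : Real.log y < Real.log x := Real.log_lt_log hy hlt
    rw [div_le_div_iff₀ (by linarith) (by norm_num)]
    have ht : 1 ≤ x / y := (one_le_div hy).mpr hlt.le
    have hk := key_log_ineq ht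
    have hy' : y ≠ 0 := hy.ne'
    have hk' := mul_le_mul_of_nonneg_right hk hy.le
    have e1 : 2 * (x / y - 1) * y = 2 * x - 2 * y := by field_simp
    rw [Real.log_div hx.ne' hy.ne'] at hk'
    have e2 : (x / y + 1) * (Real.log x - Real.log y) * y
        = (x + y) * (Real.log x - Real.log y) := by field_simp
    rw [e1, e2] at hk'
    linarith
  intro x y hx hy hxy
  rcases hxy.lt_or_gt with h | h
  · have := main hy hx h
    have heq : (x - y) / (Real.log x - Real.log y) = (y - x) / (Real.log y - Real.log x) := by
      rw [← neg_sub y x, ← neg_sub (Real.log y) (Real.log x), neg_div_neg_eq]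
    rw [heq]; linarith [this]
  · exact main hx hy h

theorem wLog_le_wArith_refinement (a b v : ℝ) (ha : 0 < a) (hb : 0 < b) (hab : a ≠ b)
    (hv : v ∈ Set.Ioo (0 : ℝ) 1) :
    wLog v a b ≤ (wGeom v a b + wArith v a b) / 2 ∧
      (wGeom v a b + wArith v a b) / 2 ≤ wArith v a b := by
  obtain ⟨hv0, hv1⟩ := hv
  have hv1' : (0:ℝ) < 1 - v := by linarith
  set g : ℝ := a ^ (1 - v) * b ^ v with hgdef
  have hgpos : 0 < g := mul_pos (Real.rpow_pos_of_pos ha _) (Real.rpow_pos_of_pos hb _)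
  have hlogg : Real.log g = (1 - v) * Real.log a + v * Real.log b := by
    rw [hgdef, Real.log_mul (Real.rpow_pos_of_pos ha _).ne' (Real.rpow_pos_of_pos hb _).ne',
      Real.log_rpow ha, Real.log_rpow hb]
  have hlogab : Real.log a ≠ Real.log b := fun h =>
    hab (Real.log_injOn_pos (Set.mem_Ioi.mpr ha) (Set.mem_Ioi.mpr hb) h)
  have hD : Real.log a - Real.log b ≠ 0 := sub_ne_zero.mpr hlogab
  have hag : a ≠ g := by
    intro h
    apply hD
    have : Real.log a = Real.log g := by rw [← h]
    rw [hlogg] at this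
    have : v * (Real.log a - Real.log b) = 0 := by linarith
    rcases mul_eq_zero.mp this with h' | h'
    · exact absurd h' hv0.ne'
    · exact h'
  have hgb : g ≠ b := by
    intro h
    apply hD
    have : Real.log g = Real.log b := by rw [h]
    rw [hlogg] at this
    have : (1 - v) * (Real.log a - Real.log b) = 0 := by linarith
    rcases mul_eq_zero.mp this with h' | h'
    · exact absurd h' hv1'.ne'
    · exact h'
  have hlag : Real.log a - Real.log g = v * (Real.log a - Real.log b) := by rw [hlogg]; ring
  have hlgb : Real.log g - Real.log b = (1 - v) * (Real.log a - Real.log b) := by rw [hlogg]; ring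
  have hsplit : wLog v a b = (1 - v) * ((a - g) / (Real.log a - Real.log g))
      + v * ((g - b) / (Real.log g - Real.log b)) := by
    rw [wLog, hlag, hlgb, ← hgdef]
    field_simp
  have hL1 := logmean_le_arith ha hgpos hag
  have hL2 := logmean_le_arith hgpos hb hgb
  have hGA : wGeom v a b ≤ wArith v a b := by
    rw [wGeom, wArith]
    exact Real.geom_mean_le_arith_mean2_weighted hv1'.le hv0.le ha.le hb.le (by ring)
  constructor
  · rw [hsplit]
    have h1 : (1 - v) * ((a - g) / (Real.log a - Real.log g)) ≤ (1 - v) * ((a + g) / 2) :=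
      mul_le_mul_of_nonneg_left hL1 hv1'.le
    have h2 : v * ((g - b) / (Real.log g - Real.log b)) ≤ v * ((g + b) / 2) :=
      mul_le_mul_of_nonneg_left hL2 hv0.le
    have : (1 - v) * ((a + g) / 2) + v * ((g + b) / 2) = (wGeom v a b + wArith v a b) / 2 := by
      rw [wGeom, wArith, ← hgdef]; ring
    linarith
  · linarith [hGA]
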